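/- Let K ∈ ℝ^{4×4} be the matrix with block form [[0, I₂],[I₂, 0]]. For a, b ∈ ℝ let X(a,b) = a(E_{1,1} + E_{2,2} − E_{3,3} − E_{4,4}) + b(E_{1,2} − E_{2,1} + E_{3,4} − E_{4,3}) ∈ ℝ^{4×4}. Then M = {E(X(a,b), 0) : a, b ∈ ℝ} is a maximal abelian subalgebra of the Lie algebra e(K). -/

import Mathlib

open Matrix

/-- `o(K)`: real matrices `X` with `XK + KXᵀ = 0`. -/
def oK {n : ℕ} (K : Matrix (Fin n) (Fin n) ℝ) : Set (Matrix (Fin n) (Fin n) ℝ) :=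
  {X | X * K + K * Xᵀ = 0}

/-- The `(n+1) × (n+1)` matrix `E(X, a)` with block form `[[X, a], [0, 0]]`. -/
def Emat {n : ℕ} (X : Matrix (Fin n) (Fin n) ℝ) (a : Fin n → ℝ) :
    Matrix (Fin (n + 1)) (Fin (n + 1)) ℝ :=
  Matrix.of fun i j =>
    if hi : i.val < n then
      if hj : j.val < n then X ⟨i.val, hi⟩ ⟨j.val, hj⟩ else a ⟨i.val, hi⟩
    else 0

/-- The Lie algebra `e(K)`, as a set of `(n+1) × (n+1)` matrices. -/
def eK {n : ℕ} (K : Matrix (Fin n) (Fin n) ℝ) :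
    Set (Matrix (Fin (n + 1)) (Fin (n + 1)) ℝ) :=
  {m | ∃ X ∈ oK K, ∃ a : Fin n → ℝ, m = Emat X a}

/-- `M` is a maximal abelian subalgebra of the matrix Lie algebra (set) `L`:
it is a linear subspace contained in `L`, its elements pairwise commute, and
every element of `L` commuting with all of `M` belongs to `M`. -/
def IsMASA {κ : Type*} [Fintype κ] (L M : Set (Matrix κ κ ℝ)) : Prop :=
  M ⊆ L ∧
  (∀ X ∈ M, ∀ Y ∈ M, X * Y = Y * X) ∧
  (0 : Matrix κ κ ℝ) ∈ M ∧
  (∀ X ∈ M, ∀ Y ∈ M, X + Y ∈ M) ∧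
  (∀ (c : ℝ), ∀ X ∈ M, c • X ∈ M) ∧
  (∀ Y ∈ L, (∀ X ∈ M, Y * X = X * Y) → Y ∈ M)

/- ### Auxiliary definitions and lemmas -/

def Xab (a b : ℝ) : Matrix (Fin 4) (Fin 4) ℝ :=
  !![a, b, 0, 0; -b, a, 0, 0; 0, 0, -a, b; 0, 0, -b, -a]

def Kmat : Matrix (Fin 4) (Fin 4) ℝ :=
  !![0, 0, 1, 0; 0, 0, 0, 1; 1, 0, 0, 0; 0, 1, 0, 0]

lemma Emat_cs {n : ℕ} (X : Matrix (Fin n) (Fin n) ℝ) (a : Fin n → ℝ) (i j : Fin n) :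
    Emat X a i.castSucc j.castSucc = X i j := by
  simp [Emat, i.isLt, j.isLt]

lemma Emat_last {n : ℕ} (X : Matrix (Fin n) (Fin n) ℝ) (a : Fin n → ℝ) (i : Fin n) :
    Emat X a i.castSucc (Fin.last n) = a i := by
  simp [Emat, i.isLt]

lemma Emat_bot {n : ℕ} (X : Matrix (Fin n) (Fin n) ℝ) (a : Fin n → ℝ) (j : Fin (n+1)) :
    Emat X a (Fin.last n) j = 0 := by
  simp [Emat]

lemma Emat_mul {n : ℕ} (X X' : Matrix (Fin n) (Fin n) ℝ) (a a' : Fin n → ℝ) :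
    Emat X a * Emat X' a' = Emat (X * X') (X.mulVec a') := by
  ext i j
  rw [mul_apply, Fin.sum_univ_castSucc]
  induction j using Fin.lastCases with
  | last => induction i using Fin.lastCases with
    | last => simp [Emat_bot]
    | cast i => simp [Emat_cs, Emat_last, Emat_bot, mulVec, dotProduct]
  | cast j => induction i using Fin.lastCases with
    | last => simp [Emat_bot]
    | cast i => simp [Emat_cs, Emat_bot, mul_apply]

lemma Emat_add {n : ℕ} (X X' : Matrix (Fin n) (Fin n) ℝ) (a a' : Fin n → ℝ) :
    Emat X a + Emat X' a' = Emat (X + X') (a + a') := by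
  ext i j
  induction j using Fin.lastCases with
  | last => induction i using Fin.lastCases with
    | last => simp [Emat_bot]
    | cast i => simp [Emat_last]
  | cast j => induction i using Fin.lastCases with
    | last => simp [Emat_bot]
    | cast i => simp [Emat_cs]

lemma Emat_smul {n : ℕ} (c : ℝ) (X : Matrix (Fin n) (Fin n) ℝ) (a : Fin n → ℝ) :
    c • Emat X a = Emat (c • X) (c • a) := by
  ext i j
  induction j using Fin.lastCases with
  | last => induction i using Fin.lastCases with
    | last => simp [Emat_bot]
    | cast i => simp [Emat_last]
  | cast j => induction i using Fin.lastCases with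
    | last => simp [Emat_bot]
    | cast i => simp [Emat_cs]

lemma Emat_inj {n : ℕ} {X X' : Matrix (Fin n) (Fin n) ℝ} {a a' : Fin n → ℝ}
    (h : Emat X a = Emat X' a') : X = X' ∧ a = a' := by
  constructor
  · ext i j
    have := congrFun (congrFun h i.castSucc) j.castSucc
    simpa [Emat_cs] using this
  · ext i
    have := congrFun (congrFun h i.castSucc) (Fin.last n)
    simpa [Emat_last] using this

lemma Emat_zero {n : ℕ} : Emat (0 : Matrix (Fin n) (Fin n) ℝ) 0 = 0 := by
  ext i j
  induction j using Fin.lastCases with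
  | last => induction i using Fin.lastCases with
    | last => simp [Emat_bot]
    | cast i => simp [Emat_last]
  | cast j => induction i using Fin.lastCases with
    | last => simp [Emat_bot]
    | cast i => simp [Emat_cs]

lemma Xab_oK (a b : ℝ) : Xab a b * Kmat + Kmat * (Xab a b)ᵀ = 0 := by
  ext i j
  fin_cases i <;> fin_cases j <;>
    simp [Xab, Kmat, mul_apply, vecMul, dotProduct, Fin.sum_univ_four, transpose_apply] <;>
    (try simp [vecHead, vecTail]) <;> (try ring)

lemma Xab_comm (a b a' b' : ℝ) : Xab a b * Xab a' b' = Xab a' b' * Xab a b := by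
  ext i j
  fin_cases i <;> fin_cases j <;>
    simp [Xab, mul_apply, Fin.sum_univ_four] <;>
    (try simp [vecHead, vecTail]) <;> (try ring)

lemma Xab_add (a b a' b' : ℝ) : Xab a b + Xab a' b' = Xab (a + a') (b + b') := by
  ext i j
  fin_cases i <;> fin_cases j <;> simp [Xab] <;>
    (try simp [vecHead, vecTail]) <;> (try ring)

lemma Xab_smul (c a b : ℝ) : c • Xab a b = Xab (c * a) (c * b) := by
  ext i j
  fin_cases i <;> fin_cases j <;> simp [Xab] <;>
    (try simp [vecHead, vecTail]) <;> (try ring)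

lemma Xab_zero : Xab 0 0 = 0 := by
  ext i j
  fin_cases i <;> fin_cases j <;> simp [Xab] <;> (try simp [vecHead, vecTail])

lemma vec_zero_of (a : Fin 4 → ℝ) (hv : (0 : Fin 4 → ℝ) = Xab 1 0 *ᵥ a) : a = 0 := by
  funext k
  have h := congrFun hv k
  fin_cases k <;>
    simp [Xab, mulVec, dotProduct, Fin.sum_univ_four] at h <;>
    simp [h] <;> (try linarith)

lemma X_eq_Xab (X : Matrix (Fin 4) (Fin 4) ℝ)
    (hX : X * Kmat + Kmat * Xᵀ = 0)
    (hM1 : X * Xab 1 0 = Xab 1 0 * X)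
    (hM2 : X * Xab 0 1 = Xab 0 1 * X) :
    X = Xab (X 0 0) (X 0 1) := by
  have e1 := fun i j => congrFun (congrFun hM1 i) j
  have e2 := fun i j => congrFun (congrFun hM2 i) j
  have e0 := fun i j => congrFun (congrFun hX i) j
  have h02 := e1 0 2; have h03 := e1 0 3; have h12 := e1 1 2; have h13 := e1 1 3
  have h20 := e1 2 0; have h21 := e1 2 1; have h30 := e1 3 0; have h31 := e1 3 1
  have g00 := e2 0 0; have g01 := e2 0 1; have g22 := e2 2 2; have g23 := e2 2 3
  have k02 := e0 0 2; have k03 := e0 0 3; have k12 := e0 1 2; have k13 := e0 1 3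
  simp [Xab, Kmat, mul_apply, vecMul, dotProduct, vecHead, vecTail, Fin.sum_univ_four, transpose_apply] at h02 h03 h12 h13 h20 h21 h30 h31 g00 g01 g22 g23 k02 k03 k12 k13
  ext i j
  fin_cases i <;> fin_cases j <;> simp [Xab] <;>
    (try simp [vecHead, vecTail]) <;> linarith

/-- `M = {E(X(a,b), 0)}` with `X(a,b) = a(E₁₁+E₂₂-E₃₃-E₄₄) + b(E₁₂-E₂₁+E₃₄-E₄₃)`
is a maximal abelian subalgebra of `e(K)`, `K = [[0, I₂],[I₂, 0]]`. -/
theorem stmt16 :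
    IsMASA (eK (!![0, 0, 1, 0; 0, 0, 0, 1; 1, 0, 0, 0; 0, 1, 0, 0] :
        Matrix (Fin 4) (Fin 4) ℝ))
      {m | ∃ a b : ℝ,
        m = Emat (!![a, b, 0, 0;
                     -b, a, 0, 0;
                     0, 0, -a, b;
                     0, 0, -b, -a] : Matrix (Fin 4) (Fin 4) ℝ) 0} := by
  show IsMASA (eK Kmat) {m | ∃ a b : ℝ, m = Emat (Xab a b) 0}
  refine ⟨?_, ?_, ?_, ?_, ?_, ?_⟩
  · rintro m ⟨a, b, rfl⟩
    exact ⟨Xab a b, Xab_oK a b, 0, rfl⟩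
  · rintro x ⟨a, b, rfl⟩ y ⟨a', b', rfl⟩
    rw [Emat_mul, Emat_mul, mulVec_zero, mulVec_zero, Xab_comm]
  · exact ⟨0, 0, by rw [Xab_zero, Emat_zero]⟩
  · rintro x ⟨a, b, rfl⟩ y ⟨a', b', rfl⟩
    exact ⟨a + a', b + b', by rw [Emat_add, Xab_add, add_zero]⟩
  · rintro c x ⟨a, b, rfl⟩
    exact ⟨c * a, c * b, by rw [Emat_smul, Xab_smul, smul_zero]⟩
  · rintro Y ⟨X, hX, a, rfl⟩ hc
    have h1 := hc (Emat (Xab 1 0) 0) ⟨1, 0, rfl⟩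
    have h2 := hc (Emat (Xab 0 1) 0) ⟨0, 1, rfl⟩
    rw [Emat_mul, Emat_mul, mulVec_zero] at h1 h2
    obtain ⟨hm1, hv1⟩ := Emat_inj h1
    obtain ⟨hm2, -⟩ := Emat_inj h2
    have ha : a = 0 := vec_zero_of a hv1
    refine ⟨X 0 0, X 0 1, ?_⟩
    rw [ha]
    exact congrArg (fun M => Emat M 0) (X_eq_Xab X hX hm1 hm2)
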